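/- arXiv:2306.15034 — 9 statements merged into one kernel-verified Lean document; each statement's English description precedes it below -/
import Mathlib

section
/- Let A be a finite-dimensional evolution algebra over a field K with natural basis B = {e_i}_{i in Λ}, and let I be an ideal of the form I = span{e_i : i in Λ'} for some subset Λ' of Λ. Then I has the absorption property if and only if for every j in Λ \ Λ', the set D^1(j) of first-generation descendants of j in the graph Γ(A,B) is not contained in Λ'. -/
open Submodule

section EvolutionPreamble

/-- The set of `k`-th generation descendants of a vertex in a directed graph
given by an edge relation `E`; `Dk E 0 i = {i}`. -/
def Dk {V : Type*} (E : V → V → Prop) : ℕ → V → Set V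
  | 0, i => {i}
  | n + 1, i => {k | ∃ j ∈ Dk E n i, E j k}

/-- A vertex is cyclic if there is a (possibly trivial) path from it to a vertex
lying on a cycle. -/
def IsCyclicVertex {V : Type*} (E : V → V → Prop) (i : V) : Prop :=
  ∃ j, Relation.ReflTransGen E i j ∧ Relation.TransGen E j j

/-- Connectedness of a directed graph: every nontrivial partition of the
vertex set is crossed by an edge (in one direction or the other). -/
def GraphConnected {V : Type*} (E : V → V → Prop) : Prop :=
  ∀ s : Set V, s.Nonempty → sᶜ.Nonempty → ∃ x ∈ s, ∃ y ∈ sᶜ, E x y ∨ E y x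

variable {K : Type*} [Field K] {A : Type*} [NonUnitalNonAssocRing A]
  [Module K A] [SMulCommClass K A A] [IsScalarTower K A A] {ι : Type*}

/-- A basis is natural if distinct basis vectors multiply to zero. -/
def IsNaturalBasis (B : Module.Basis ι K A) : Prop := ∀ i j, i ≠ j → B i * B j = 0

/-- Edge relation of the directed graph `Γ(A,B)` associated to an evolution
algebra `A` with natural basis `B`: `(i,k)` is an edge iff the structure
constant `w_{ik}` is nonzero. -/
def edge (B : Module.Basis ι K A) (i k : ι) : Prop := B.repr (B i * B i) k ≠ 0

/-- First-generation descendants in `Γ(A,B)`. -/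
def D1 (B : Module.Basis ι K A) (i : ι) : Set ι := {k | edge B i k}

/-- The increasing chain of index sets `λ_k(B)`: `λ_0 = ∅`,
`λ_{k+1}(B) = {i : D¹(i) ⊆ λ_k(B)}`.  In particular
`λ_1(B) = {i : e_i² = 0}`. -/
def lam (B : Module.Basis ι K A) : ℕ → Set ι
  | 0 => ∅
  | n + 1 => {i | ∀ k, edge B i k → k ∈ lam B n}

/-- `I` is a (two-sided) ideal. -/
def IsIdeal (I : Submodule K A) : Prop := ∀ x ∈ I, ∀ a : A, x * a ∈ I ∧ a * x ∈ I

/-- The absorption property: `xA ⊆ I` implies `x ∈ I`. -/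
def HasAbsorption (I : Submodule K A) : Prop := ∀ x : A, (∀ a : A, x * a ∈ I) → x ∈ I

/-- The absorption radical: intersection of all ideals with the absorption property. -/
def rad (K : Type*) (A : Type*) [Field K] [NonUnitalNonAssocRing A]
    [Module K A] [SMulCommClass K A A] [IsScalarTower K A A] : Submodule K A :=
  sInf {I : Submodule K A | IsIdeal I ∧ HasAbsorption I}

lemma rad_isIdeal : IsIdeal (rad K A) := by
  intro x hx a
  rw [rad, Submodule.mem_sInf] at hx
  constructor <;>
    · rw [rad, Submodule.mem_sInf]
      intro I hI
      first
        | exact (hI.1 x (hx I hI) a).1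
        | exact (hI.1 x (hx I hI) a).2

/-- The annihilator `ann(A) = {x : xA = Ax = 0}` as a submodule. -/
def annSub (K : Type*) (A : Type*) [Field K] [NonUnitalNonAssocRing A]
    [Module K A] [SMulCommClass K A A] [IsScalarTower K A A] : Submodule K A where
  carrier := {x | ∀ a : A, x * a = 0 ∧ a * x = 0}
  add_mem' := by
    intro x y hx hy a
    constructor
    · rw [add_mul, (hx a).1, (hy a).1, add_zero]
    · rw [mul_add, (hx a).2, (hy a).2, add_zero]
  zero_mem' := by intro a; simp
  smul_mem' := by
    intro c x hx a
    constructor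
    · rw [smul_mul_assoc, (hx a).1, smul_zero]
    · rw [mul_smul_comm, (hx a).2, smul_zero]

/-- The upper annihilating series: `ann⁰(A) = 0`,
`annⁱ⁺¹(A) = {x : xA ∪ Ax ⊆ annⁱ(A)}`. -/
def annSeries (K : Type*) (A : Type*) [Field K] [NonUnitalNonAssocRing A]
    [Module K A] [SMulCommClass K A A] [IsScalarTower K A A] : ℕ → Submodule K A
  | 0 => ⊥
  | n + 1 =>
    { carrier := {x | ∀ a : A, x * a ∈ annSeries K A n ∧ a * x ∈ annSeries K A n}
      add_mem' := by
        intro x y hx hy a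
        constructor
        · rw [add_mul]; exact add_mem (hx a).1 (hy a).1
        · rw [mul_add]; exact add_mem (hx a).2 (hy a).2
      zero_mem' := by intro a; simp
      smul_mem' := by
        intro c x hx a
        constructor
        · rw [smul_mul_assoc]; exact smul_mem _ c (hx a).1
        · rw [mul_smul_comm]; exact smul_mem _ c (hx a).2 }

/-- The annihilator stabilizing index `asi(A)`. -/
noncomputable def asi (K : Type*) (A : Type*) [Field K] [NonUnitalNonAssocRing A]
    [Module K A] [SMulCommClass K A A] [IsScalarTower K A A] : ℕ :=
  sInf {q : ℕ | annSeries K A q = annSeries K A (q + 1)}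

/-- Product of two submodules (span of pairwise products). -/
def smulSub (I J : Submodule K A) : Submodule K A :=
  Submodule.span K (Set.image2 (· * ·) (I : Set A) (J : Set A))

/-- Powers of a subalgebra/ideal, with `N^{k} = Σ_{i+j=k, i,j ≥ 1} Nⁱ Nʲ`. -/
def npow (I : Submodule K A) : ℕ → Submodule K A
  | 0 => ⊥
  | 1 => I
  | n + 2 => ⨆ i : Fin (n + 1), smulSub (npow I (i.1 + 1)) (npow I (n + 1 - i.1))
  termination_by n => n
  decreasing_by
  · have := i.isLt; omega
  · have := i.isLt; omega

/-- `I` is an ideal of the subalgebra `N`. -/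
def IsIdealIn (N I : Submodule K A) : Prop :=
  I ≤ N ∧ ∀ x ∈ I, ∀ a ∈ N, x * a ∈ I ∧ a * x ∈ I

/-- The (sub)algebra `N` is decomposable: it is the direct sum of two nonzero
ideals of `N`. -/
def DecomposableIn (N : Submodule K A) : Prop :=
  ∃ I J : Submodule K A, IsIdealIn N I ∧ IsIdealIn N J ∧ I ≠ ⊥ ∧ J ≠ ⊥ ∧
    I ⊓ J = ⊥ ∧ I ⊔ J = N

/-- Multiplication inside an ideal `N` (an ideal is closed under products). -/
def subMul {N : Submodule K A} (hN : IsIdeal N) (x y : N) : N :=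
  ⟨(x : A) * (y : A), (hN x x.2 y).1⟩

/-- The induced multiplication on the quotient `A ⧸ I` by an ideal `I`. -/
def quotMul (I : Submodule K A) (hI : IsIdeal I) (x y : A ⧸ I) : A ⧸ I :=
  Quotient.liftOn₂ x y (fun a b => Submodule.Quotient.mk (a * b)) (by
    intro a b a' b' ha hb
    have ha' : a - a' ∈ I := (Submodule.quotientRel_def I).mp ha
    have hb' : b - b' ∈ I := (Submodule.quotientRel_def I).mp hb
    refine (Submodule.Quotient.eq I).mpr ?_
    have h : a * b - a' * b' = a * (b - b') + (a - a') * b' := by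
      rw [mul_sub, sub_mul]; abel
    rw [h]
    exact add_mem (hI _ hb' a).2 (hI _ ha' b').1)

/-- Edge relation of the graph associated to the quotient evolution algebra
`A ⧸ I` relative to a basis `C`. -/
def edgeQ {κ : Type*} (I : Submodule K A) (hI : IsIdeal I)
    (C : Module.Basis κ K (A ⧸ I)) (i k : κ) : Prop :=
  C.repr (quotMul I hI (C i) (C i)) k ≠ 0

end EvolutionPreamble

lemma mul_basis_eq {K : Type*} [Field K] {A : Type*} [NonUnitalNonAssocRing A]
    [Module K A] [SMulCommClass K A A] [IsScalarTower K A A]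
    {ι : Type*} [Fintype ι] (B : Module.Basis ι K A) (hB : IsNaturalBasis B)
    (x : A) (j : ι) : x * B j = B.repr x j • (B j * B j) := by
  conv_lhs => rw [← B.sum_repr x]
  rw [Finset.sum_mul, Finset.sum_eq_single j]
  · rw [smul_mul_assoc]
  · intro i _ hij
    rw [smul_mul_assoc, hB i j hij, smul_zero]
  · intro h; exact absurd (Finset.mem_univ j) h

lemma basis_mul_eq {K : Type*} [Field K] {A : Type*} [NonUnitalNonAssocRing A]
    [Module K A] [SMulCommClass K A A] [IsScalarTower K A A]
    {ι : Type*} [Fintype ι] (B : Module.Basis ι K A) (hB : IsNaturalBasis B)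
    (x : A) (j : ι) : B j * x = B.repr x j • (B j * B j) := by
  conv_lhs => rw [← B.sum_repr x]
  rw [Finset.mul_sum, Finset.sum_eq_single j]
  · rw [mul_smul_comm]
  · intro i _ hij
    rw [mul_smul_comm, hB j i (Ne.symm hij), smul_zero]
  · intro h; exact absurd (Finset.mem_univ j) h

/-- An ideal spanned by a subset of a natural basis has the absorption property
iff no `j` outside `Λ'` has all its first-generation descendants inside `Λ'`. -/
theorem stmt1 {K : Type*} [Field K] {A : Type*} [NonUnitalNonAssocRing A]
    [Module K A] [SMulCommClass K A A] [IsScalarTower K A A]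
    {ι : Type*} [Fintype ι] (B : Module.Basis ι K A) (hB : IsNaturalBasis B)
    (Λ' : Set ι) (I : Submodule K A) (hI : IsIdeal I)
    (hspan : I = Submodule.span K (B '' Λ')) :
    HasAbsorption I ↔ ∀ j ∉ Λ', ¬ D1 B j ⊆ Λ' := by
  constructor
  · intro habs j hj hD
    have hsq : B j * B j ∈ I := by
      rw [hspan, Module.Basis.mem_span_image]
      intro k hk
      exact hD (Finsupp.mem_support_iff.mp hk)
    have hmem : B j ∈ I := by
      apply habs
      intro a
      rw [basis_mul_eq B hB a j]
      exact Submodule.smul_mem _ _ hsq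
    rw [hspan, Module.Basis.mem_span_image] at hmem
    apply hj
    apply hmem
    simp [B.repr_self]
  · intro h x hx
    rw [hspan, Module.Basis.mem_span_image]
    intro k hk
    by_contra hk'
    have hrk : B.repr x k ≠ 0 := Finsupp.mem_support_iff.mp hk
    have hxk := hx (B k)
    rw [mul_basis_eq B hB x k, hspan] at hxk
    have hsq : B k * B k ∈ Submodule.span K (B '' Λ') := by
      have h2 := Submodule.smul_mem _ (B.repr x k)⁻¹ hxk
      rwa [smul_smul, inv_mul_cancel₀ hrk, one_smul] at h2
    rw [Module.Basis.mem_span_image] at hsq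
    obtain ⟨m, hm1, hm2⟩ := Set.not_subset.mp (h k hk')
    exact hm2 (hsq (Finsupp.mem_support_iff.mpr hm1))
end

section
/- Let A be a finite-dimensional evolution algebra with natural basis B = {e_i}_{i in Λ}, and suppose rad(A) = span{e_i : i in Λ'} for Λ' ⊆ Λ. If j in Λ and D^n(j) ⊆ Λ' for some positive integer n (descendants taken in Γ(A,B)), then j in Λ'. -/
open Submodule

section Aux

variable {K : Type*} [Field K] {A : Type*} [NonUnitalNonAssocRing A]
  [Module K A] [SMulCommClass K A A] [IsScalarTower K A A] {ι : Type*}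

lemma rad_hasAbsorption : HasAbsorption (rad K A) := by
  intro x hx
  rw [rad, Submodule.mem_sInf]
  intro I hI
  exact hI.2 x fun a => Submodule.mem_sInf.mp (hx a) I hI

lemma Dk_succ_eq {V : Type*} (E : V → V → Prop) (n : ℕ) (j : V) :
    Dk E (n + 1) j = ⋃ m ∈ Dk E 1 j, Dk E n m := by
  induction n generalizing j with
  | zero =>
    ext k
    simp [Dk]
  | succ n ih =>
    ext k
    simp only [Set.mem_iUnion]
    constructor
    · rintro ⟨x, hx, hE⟩
      rw [ih] at hx
      simp only [Set.mem_iUnion] at hx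
      obtain ⟨m, hm, hxm⟩ := hx
      exact ⟨m, hm, x, hxm, hE⟩
    · rintro ⟨m, hm, x, hxm, hE⟩
      refine ⟨x, ?_, hE⟩
      rw [ih]
      simp only [Set.mem_iUnion]
      exact ⟨m, hm, hxm⟩

lemma key_step [Fintype ι] (B : Module.Basis ι K A) (hB : IsNaturalBasis B)
    (Λ' : Set ι) (hrad : rad K A = Submodule.span K (B '' Λ'))
    (i : ι) (hD : Dk (edge B) 1 i ⊆ Λ') : i ∈ Λ' := by
  have hsq : B i * B i ∈ rad K A := by
    rw [hrad]
    rw [← B.sum_repr (B i * B i)]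
    apply Submodule.sum_mem
    intro k _
    by_cases h0 : B.repr (B i * B i) k = 0
    · simp [h0]
    · have hk : k ∈ Λ' := by
        apply hD
        simp only [Dk, Set.mem_setOf_eq]
        exact ⟨i, rfl, h0⟩
      exact Submodule.smul_mem _ _ (Submodule.subset_span ⟨k, hk, rfl⟩)
  have hmul : ∀ a : A, B i * a ∈ rad K A := by
    intro a
    have ha : B i * a = ∑ k, B.repr a k • (B i * B k) := by
      conv_lhs => rw [← B.sum_repr a]
      rw [Finset.mul_sum]
      simp [mul_smul_comm]
    rw [ha]
    apply Submodule.sum_mem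
    intro k _
    by_cases hk : k = i
    · subst hk; exact Submodule.smul_mem _ _ hsq
    · rw [hB i k fun h => hk h.symm, smul_zero]
      exact Submodule.zero_mem _
  have hi : B i ∈ rad K A := rad_hasAbsorption _ hmul
  rw [hrad] at hi
  exact B.self_mem_span_image.mp hi

end Aux

/-- If `rad(A) = span{e_i : i ∈ Λ'}` and `Dⁿ(j) ⊆ Λ'` for some `n ≥ 1`,
then `j ∈ Λ'`. -/
theorem stmt2 {K : Type*} [Field K] {A : Type*} [NonUnitalNonAssocRing A]
    [Module K A] [SMulCommClass K A A] [IsScalarTower K A A]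
    {ι : Type*} [Fintype ι] (B : Module.Basis ι K A) (hB : IsNaturalBasis B)
    (Λ' : Set ι) (hrad : rad K A = Submodule.span K (B '' Λ'))
    (j : ι) (n : ℕ) (hn : 1 ≤ n) (h : Dk (edge B) n j ⊆ Λ') :
    j ∈ Λ' := by
  obtain ⟨m, rfl⟩ := Nat.exists_eq_add_of_le hn
  clear hn
  induction m generalizing j with
  | zero => exact key_step B hB Λ' hrad j h
  | succ m ih =>
    apply key_step B hB Λ' hrad j
    intro k hk
    apply ih k
    intro x hx
    apply h
    rw [show 1 + (m + 1) = (1 + m) + 1 by ring, Dk_succ_eq]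
    simp only [Set.mem_iUnion]
    exact ⟨k, hk, hx⟩
end

section
/- Let A be a finite-dimensional evolution algebra with natural basis B, and let m = asi(A) be the annihilator stabilizing index. Then rad(A) = span{e_i : i in λ_m(B)}, where λ_1(B) = {i : e_i^2 = 0} and λ_k(B) = {i : D^1(i) ⊆ λ_{k-1}(B)}. -/
open Submodule

section MyAux
variable {K : Type*} [Field K] {A : Type*} [NonUnitalNonAssocRing A]
  [Module K A] [SMulCommClass K A A] [IsScalarTower K A A] {ι : Type*} [Fintype ι]

lemma mul_expand (B : Module.Basis ι K A) (hB : IsNaturalBasis B) (x a : A) :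
    x * a = ∑ i, (B.repr x i * B.repr a i) • (B i * B i) := by
  conv_lhs => rw [← B.sum_repr x, ← B.sum_repr a]
  rw [Finset.sum_mul_sum]
  refine Finset.sum_congr rfl fun i _ => ?_
  rw [Finset.sum_eq_single i]
  · rw [smul_mul_assoc, mul_smul_comm, smul_smul]
  · intro j _ hj
    rw [smul_mul_assoc, mul_smul_comm, hB i j (Ne.symm hj), smul_zero, smul_zero]
  · intro h; exact absurd (Finset.mem_univ i) h

lemma mul_comm_nb (B : Module.Basis ι K A) (hB : IsNaturalBasis B) (x a : A) : x * a = a * x := by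
  rw [mul_expand B hB, mul_expand B hB]
  exact Finset.sum_congr rfl fun i _ => by rw [mul_comm]

lemma repr_mul (B : Module.Basis ι K A) (hB : IsNaturalBasis B) (x a : A) (k : ι) :
    B.repr (x * a) k = ∑ i, (B.repr x i * B.repr a i) * B.repr (B i * B i) k := by
  rw [mul_expand B hB, map_sum, Finsupp.finset_sum_apply]
  exact Finset.sum_congr rfl fun i _ => by rw [map_smul, Finsupp.smul_apply, smul_eq_mul]

lemma annSeries_mono (n : ℕ) : annSeries K A n ≤ annSeries K A (n + 1) := by
  induction n with
  | zero => exact bot_le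
  | succ n ih =>
    intro x hx a
    exact ⟨ih (hx a).1, ih (hx a).2⟩

lemma annSeries_isIdeal (n : ℕ) : IsIdeal (annSeries K A n) := by
  intro x hx a
  cases n with
  | zero =>
    have : x = 0 := by simpa [annSeries] using hx
    subst this; simp
  | succ n =>
    exact ⟨annSeries_mono n (hx a).1, annSeries_mono n (hx a).2⟩

lemma annSeries_le_rad (n : ℕ) : annSeries K A n ≤ rad K A := by
  induction n with
  | zero => exact bot_le
  | succ n ih =>
    intro x hx
    rw [rad, Submodule.mem_sInf]
    intro I hI
    refine hI.2 x fun a => ?_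
    have : x * a ∈ rad K A := ih (hx a).1
    rw [rad, Submodule.mem_sInf] at this
    exact this I hI

lemma annSeries_stab_exists (B : Module.Basis ι K A) :
    ∃ q, annSeries K A q = annSeries K A (q + 1) := by
  by_contra h
  push_neg at h
  have : FiniteDimensional K A := Module.Finite.of_basis B
  have key : ∀ n, n ≤ Module.finrank K (annSeries K A n) := by
    intro n
    induction n with
    | zero => exact Nat.zero_le _
    | succ n ih =>
      have hlt : annSeries K A n < annSeries K A (n + 1) :=
        lt_of_le_of_ne (annSeries_mono n) (h n)
      have := Submodule.finrank_lt_finrank_of_lt hlt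
      omega
  have h1 := key (Module.finrank K A + 1)
  have h2 := Submodule.finrank_le (annSeries K A (Module.finrank K A + 1))
  omega

lemma asi_spec (B : Module.Basis ι K A) :
    annSeries K A (asi K A) = annSeries K A (asi K A + 1) :=
  Nat.sInf_mem (annSeries_stab_exists B)

lemma rad_eq_annSeries (B : Module.Basis ι K A) (hB : IsNaturalBasis B) :
    rad K A = annSeries K A (asi K A) := by
  refine le_antisymm ?_ (annSeries_le_rad _)
  refine sInf_le ⟨annSeries_isIdeal _, ?_⟩
  intro x hx
  rw [asi_spec B]
  exact fun a => ⟨hx a, by rw [mul_comm_nb B hB]; exact hx a⟩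

lemma annSeries_eq_span_lam (B : Module.Basis ι K A) (hB : IsNaturalBasis B) (n : ℕ) :
    annSeries K A n = Submodule.span K (B '' lam B n) := by
  induction n with
  | zero =>
    rw [show lam B 0 = ∅ from rfl]
    simp [annSeries]
  | succ n ih =>
    ext x
    constructor
    · intro hx
      rw [Module.Basis.mem_span_image]
      intro i hi
      rw [Finset.mem_coe, Finsupp.mem_support_iff] at hi
      intro k hk
      have hxBi := (hx (B i)).1
      rw [ih, Module.Basis.mem_span_image] at hxBi
      refine hxBi ?_
      rw [Finset.mem_coe, Finsupp.mem_support_iff, repr_mul B hB]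
      rw [Finset.sum_eq_single i]
      · simp only [Module.Basis.repr_self, Finsupp.single_eq_same, mul_one]
        exact mul_ne_zero hi hk
      · intro j _ hj
        have hz : (B.repr (B i)) j = 0 := by
          rw [Module.Basis.repr_self]; exact Finsupp.single_eq_of_ne' (Ne.symm hj)
        rw [hz, mul_zero, zero_mul]
      · intro h; exact absurd (Finset.mem_univ i) h
    · intro hx
      rw [Module.Basis.mem_span_image] at hx
      have key : ∀ a : A, x * a ∈ annSeries K A n := by
        intro a
        rw [ih, Module.Basis.mem_span_image]
        intro k hk
        rw [Finset.mem_coe, Finsupp.mem_support_iff, repr_mul B hB] at hk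
        obtain ⟨i, _, hi⟩ := Finset.exists_ne_zero_of_sum_ne_zero hk
        have hxi : B.repr x i ≠ 0 := fun h => hi (by rw [h]; ring)
        have hwik : B.repr (B i * B i) k ≠ 0 := fun h => hi (by rw [h]; ring)
        exact hx (Finsupp.mem_support_iff.mpr hxi) k hwik
      exact fun a => ⟨key a, by rw [mul_comm_nb B hB]; exact key a⟩

end MyAux

/-- `rad(A) = span{e_i : i ∈ λ_m(B)}` where `m = asi(A)`. -/
theorem stmt5 {K : Type*} [Field K] {A : Type*} [NonUnitalNonAssocRing A]
    [Module K A] [SMulCommClass K A A] [IsScalarTower K A A]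
    {ι : Type*} [Fintype ι] (B : Module.Basis ι K A) (hB : IsNaturalBasis B) :
    rad K A = Submodule.span K (B '' lam B (asi K A)) := by
  rw [rad_eq_annSeries B hB, annSeries_eq_span_lam B hB]
end

section
/- Let A be a finite-dimensional evolution algebra with natural basis B = {e_i}_{i in Λ} and m = asi(A). If μ is a cycle in the graph Γ(A,B), then no vertex of μ belongs to λ_m(B). -/
open Submodule

/-- No vertex lying on a cycle of `Γ(A,B)` belongs to `λ_m(B)`, `m = asi(A)`. -/
theorem stmt6 {K : Type*} [Field K] {A : Type*} [NonUnitalNonAssocRing A]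
    [Module K A] [SMulCommClass K A A] [IsScalarTower K A A]
    {ι : Type*} [Fintype ι] (B : Module.Basis ι K A) (hB : IsNaturalBasis B)
    (j : ι) (hj : Relation.TransGen (edge B) j j) :
    j ∉ lam B (asi K A) := by
  have key : ∀ n i, Relation.TransGen (edge B) i i → i ∉ lam B n := by
    intro n
    induction n with
    | zero => intro i _ h; exact h
    | succ n ih =>
      intro i hi hmem
      obtain ⟨k, hik, hki⟩ := (Relation.TransGen.head'_iff).mp hi
      exact ih k (Relation.TransGen.tail' hki hik) (hmem k hik)
  exact key _ j hj
end

section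
/- Let A be a finite-dimensional evolution algebra with natural basis B and m = asi(A). If i is a cyclic vertex of Γ(A,B) (there is a path from i to a cycle), then i does not belong to λ_m(B). -/
open Submodule

section AuxLam

variable {K : Type*} [Field K] {A : Type*} [NonUnitalNonAssocRing A]
  [Module K A] [SMulCommClass K A A] [IsScalarTower K A A] {ι : Type*}

lemma lam_mono (B : Module.Basis ι K A) : ∀ n, lam B n ⊆ lam B (n + 1) := by
  intro n
  induction n with
  | zero => intro x hx; exact absurd hx (by simp [lam])
  | succ n ih => intro x hx k hk; exact ih (hx k hk)

lemma lam_edge (B : Module.Basis ι K A) {n : ℕ} {i k : ι}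
    (hi : i ∈ lam B n) (h : edge B i k) : k ∈ lam B n := by
  cases n with
  | zero => exact absurd hi (by simp [lam])
  | succ n => exact lam_mono B n (hi k h)

lemma lam_rtg (B : Module.Basis ι K A) {n : ℕ} {i j : ι}
    (hi : i ∈ lam B n) (h : Relation.ReflTransGen (edge B) i j) : j ∈ lam B n := by
  induction h with
  | refl => exact hi
  | tail _ he ih => exact lam_edge B ih he

lemma cycle_not_lam (B : Module.Basis ι K A) :
    ∀ (n : ℕ) (j : ι), Relation.TransGen (edge B) j j → j ∉ lam B n := by
  intro n
  induction n with
  | zero => intro j _ hj; exact absurd hj (by simp [lam])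
  | succ n ih =>
    intro j hcyc hj
    obtain ⟨k, hjk, hkj⟩ := Relation.TransGen.head'_iff.mp hcyc
    have hk : k ∈ lam B n := hj k hjk
    exact ih j hcyc (lam_rtg B hk hkj)

end AuxLam

/-- A cyclic vertex of `Γ(A,B)` does not belong to `λ_m(B)`, `m = asi(A)`. -/
theorem stmt7 {K : Type*} [Field K] {A : Type*} [NonUnitalNonAssocRing A]
    [Module K A] [SMulCommClass K A A] [IsScalarTower K A A]
    {ι : Type*} [Fintype ι] (B : Module.Basis ι K A) (hB : IsNaturalBasis B)
    (i : ι) (hi : IsCyclicVertex (edge B) i) :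
    i ∉ lam B (asi K A) := by
  intro hmem
  obtain ⟨j, hij, hcyc⟩ := hi
  exact cycle_not_lam B _ j hcyc (lam_rtg B hmem hij)
end

section
/- Let A be a finite-dimensional evolution algebra with natural basis B and m = asi(A). If i ∈ λ_m(B) \ λ_1(B), then there exists a path in Γ(A,B) from i to some vertex j ∈ λ_1(B), i.e., to a sink. -/
open Submodule

lemma lam_reaches_sink {K : Type*} [Field K] {A : Type*} [NonUnitalNonAssocRing A]
    [Module K A] [SMulCommClass K A A] [IsScalarTower K A A]
    {ι : Type*} (B : Module.Basis ι K A) :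
    ∀ n (i : ι), i ∈ lam B n → ∃ j ∈ lam B 1, Relation.ReflTransGen (edge B) i j := by
  intro n
  induction n with
  | zero => intro i hi; exact absurd hi (by simp [lam])
  | succ n ih =>
    intro i hi
    by_cases h1 : i ∈ lam B 1
    · exact ⟨i, h1, Relation.ReflTransGen.refl⟩
    · have : ∃ k, edge B i k := by
        by_contra h
        push_neg at h
        exact h1 (fun k hk => absurd hk (h k))
      obtain ⟨k, hk⟩ := this
      obtain ⟨j, hj, hpath⟩ := ih k (hi k hk)
      exact ⟨j, hj, Relation.ReflTransGen.head hk hpath⟩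

/-- From each vertex of `λ_m(B) \ λ_1(B)` there is a path to a sink
(a vertex of `λ_1(B)`). -/
theorem stmt8 {K : Type*} [Field K] {A : Type*} [NonUnitalNonAssocRing A]
    [Module K A] [SMulCommClass K A A] [IsScalarTower K A A]
    {ι : Type*} [Fintype ι] (B : Module.Basis ι K A) (hB : IsNaturalBasis B)
    (i : ι) (hi : i ∈ lam B (asi K A)) (hi1 : i ∉ lam B 1) :
    ∃ j ∈ lam B 1, Relation.ReflTransGen (edge B) i j := by
  exact lam_reaches_sink B (asi K A) i hi
end

section
/- Let A be a finite-dimensional evolution algebra with natural basis B. Then the following are equivalent: (i) A = rad(A); (ii) the associated graph Γ(A,B) has no cycles; (iii) A is nilpotent. -/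
open Submodule

section Helpers
set_option linter.unusedSectionVars false

variable {K : Type*} [Field K] {A : Type*} [NonUnitalNonAssocRing A]
  [Module K A] [SMulCommClass K A A] [IsScalarTower K A A] {ι : Type*} [Fintype ι]
  {B : Module.Basis ι K A}

lemma aux_mulEq (hB : IsNaturalBasis B) (x y : A) :
    x * y = ∑ i : ι, (B.repr x i * B.repr y i) • (B i * B i) := by
  conv_lhs => rw [← B.sum_repr x, ← B.sum_repr y]
  rw [Finset.sum_mul_sum]
  refine Finset.sum_congr rfl fun i _ => ?_
  rw [Finset.sum_eq_single i]
  · rw [smul_mul_assoc, mul_smul_comm, smul_smul]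
  · intro j _ hj
    rw [smul_mul_assoc, mul_smul_comm, hB i j (Ne.symm hj), smul_zero, smul_zero]
  · intro h; exact absurd (Finset.mem_univ i) h

lemma aux_mul_basis (hB : IsNaturalBasis B) (x : A) (j : ι) :
    x * B j = (B.repr x j) • (B j * B j) := by
  rw [aux_mulEq hB, Finset.sum_eq_single j]
  · simp
  · intro i _ hij
    simp [Finsupp.single_apply, Ne.symm hij]
  · intro h; exact absurd (Finset.mem_univ j) h

lemma aux_mem_spanS {S : Set ι} {x : A} :
    x ∈ span K (B '' S) ↔ ∀ i, B.repr x i ≠ 0 → i ∈ S := by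
  rw [Module.Basis.mem_span_image]
  constructor
  · intro h i hi; exact h (Finsupp.mem_support_iff.mpr hi)
  · intro h i hi; exact h i (Finsupp.mem_support_iff.mp hi)

lemma aux_sq_mem (i : ι) : B i * B i ∈ span K (B '' {k | edge B i k}) :=
  aux_mem_spanS.mpr fun _ hk => hk

lemma aux_prod_mem (hB : IsNaturalBasis B) {S : Set ι} (x y : A)
    (h : ∀ i, B.repr x i * B.repr y i ≠ 0 → i ∈ S) :
    x * y ∈ span K (B '' {k | ∃ i ∈ S, edge B i k}) := by
  rw [aux_mulEq hB]
  refine sum_mem fun i _ => ?_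
  by_cases hc : B.repr x i * B.repr y i = 0
  · rw [hc, zero_smul]; exact zero_mem _
  · refine smul_mem _ _ (span_mono (Set.image_mono ?_) (aux_sq_mem i))
    intro k hk
    exact ⟨i, h i hc, hk⟩

lemma aux_npow_one (I : Submodule K A) : npow I 1 = I := by rw [npow]

lemma aux_npow_succ_succ (I : Submodule K A) (n : ℕ) :
    npow I (n + 2) = ⨆ i : Fin (n + 1), smulSub (npow I (i.1 + 1)) (npow I (n + 1 - i.1)) := by
  rw [npow]

lemma aux_mul_mem_smulSub {I J : Submodule K A} {x y : A} (hx : x ∈ I) (hy : y ∈ J) :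
    x * y ∈ smulSub I J :=
  subset_span (Set.mem_image2_of_mem hx hy)

lemma aux_smulSub_le_succ (I : Submodule K A) (n : ℕ) :
    smulSub (npow I (n + 1)) I ≤ npow I (n + 2) := by
  rw [aux_npow_succ_succ]
  have h := le_iSup (fun i : Fin (n + 1) => smulSub (npow I (i.1 + 1)) (npow I (n + 1 - i.1)))
    ⟨n, Nat.lt_succ_self n⟩
  simpa [show n + 1 - n = 1 from by omega, aux_npow_one] using h

lemma aux_dk_chain {V : Type*} (E : V → V → Prop) :
    ∀ m i k, k ∈ Dk E m i →
      ∃ f : ℕ → V, f 0 = i ∧ f m = k ∧ ∀ t < m, E (f t) (f (t + 1)) := by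
  intro m
  induction m with
  | zero =>
    intro i k hk
    exact ⟨fun _ => i, rfl, hk.symm, fun t ht => absurd ht (Nat.not_lt_zero t)⟩
  | succ n ih =>
    intro i k hk
    obtain ⟨j, hj, hE⟩ := hk
    obtain ⟨f, h0, hn, hf⟩ := ih i j hj
    refine ⟨fun t => if t ≤ n then f t else k, by simp [h0], by simp, ?_⟩
    intro t ht
    rcases Nat.lt_succ_iff_lt_or_eq.mp ht with h | h
    · have h1 : t ≤ n := le_of_lt h
      have h2 : t + 1 ≤ n := h
      simp only [h1, h2, if_pos]
      exact hf t h
    · subst h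
      simp only [le_refl, if_pos, Nat.lt_irrefl, Nat.not_succ_le_self, if_neg, hn]
      exact hE

lemma aux_chain_rtg {V : Type*} (E : V → V → Prop) (f : ℕ → V) (m : ℕ)
    (hf : ∀ t < m, E (f t) (f (t + 1))) :
    ∀ b ≤ m, ∀ a ≤ b, Relation.ReflTransGen E (f a) (f b) := by
  intro b
  induction b with
  | zero =>
    intro _ a ha
    rw [Nat.le_zero.mp ha]
  | succ n ih =>
    intro hb a ha
    rcases Nat.lt_succ_iff_lt_or_eq.mp (Nat.lt_succ_of_le ha) with h | h
    · exact (ih (le_of_lt (Nat.lt_of_succ_le hb)) a (Nat.lt_succ_iff.mp h)).tail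
        (hf n (Nat.lt_of_succ_le hb))
    · rw [h]
    -- second case: a = n+1
lemma aux_Dk_empty {V : Type*} [Fintype V] (E : V → V → Prop)
    (h : ∀ j, ¬ Relation.TransGen E j j) (i k : V) :
    k ∉ Dk E (Fintype.card V) i := by
  intro hk
  obtain ⟨f, _, _, hf⟩ := aux_dk_chain E (Fintype.card V) i k hk
  have hni : ¬ Function.Injective fun t : Fin (Fintype.card V + 1) => f t := by
    intro hinj
    have := Fintype.card_le_of_injective _ hinj
    simp at this
  obtain ⟨a, b, hab, hne⟩ := Function.not_injective_iff.mp hni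
  wlog hlt : (a : ℕ) < (b : ℕ) generalizing a b
  · exact this b a hab.symm (Ne.symm hne)
      (lt_of_le_of_ne (not_lt.mp hlt) (fun hc => hne (Fin.ext hc.symm)))
  have hcyc : Relation.TransGen E (f a) (f a) := by
    have hstep : E (f a) (f (a + 1)) := hf a (lt_of_lt_of_le hlt (Nat.lt_succ_iff.mp b.isLt))
    have hrtg : Relation.ReflTransGen E (f (a + 1)) (f b) :=
      aux_chain_rtg E f (Fintype.card V) hf b (Nat.lt_succ_iff.mp b.isLt) (a + 1) hlt
    have := Relation.TransGen.head' hstep hrtg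
    rwa [← hab] at this
  exact h (f a) hcyc
end Helpers

section Helpers2
set_option linter.unusedSectionVars false

variable {K : Type*} [Field K] {A : Type*} [NonUnitalNonAssocRing A]
  [Module K A] [SMulCommClass K A A] [IsScalarTower K A A] {ι : Type*} [Fintype ι]
  {B : Module.Basis ι K A}

lemma aux_npow_le_span (hB : IsNaturalBasis B) :
    ∀ m n, 2 ^ m ≤ n →
      npow (⊤ : Submodule K A) n ≤ span K (B '' {k | ∃ i, k ∈ Dk (edge B) m i}) := by
  intro m
  induction m with
  | zero =>
    intro n _
    have huniv : {k | ∃ i, k ∈ Dk (edge B) 0 i} = Set.univ := by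
      ext k; simp only [Set.mem_setOf_eq, Set.mem_univ, iff_true]
      exact ⟨k, rfl⟩
    rw [huniv, Set.image_univ, B.span_eq]
    exact le_top
  | succ m ih =>
    intro n hn
    have h2 : 2 ≤ n := le_trans (Nat.one_lt_two_pow_iff.mpr (Nat.succ_ne_zero m)) hn
    obtain ⟨n', rfl⟩ : ∃ n', n = n' + 2 := ⟨n - 2, by omega⟩
    rw [aux_npow_succ_succ]
    apply iSup_le
    rintro ⟨i, hi⟩
    have hstep : {k | ∃ j ∈ {k | ∃ i0, k ∈ Dk (edge B) m i0}, edge B j k}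
        ⊆ {k | ∃ i0, k ∈ Dk (edge B) (m + 1) i0} := by
      rintro k ⟨j, ⟨i0, hj⟩, he⟩
      exact ⟨i0, j, hj, he⟩
    have hmax : 2 ^ m ≤ i + 1 ∨ 2 ^ m ≤ n' + 1 - i := by
      have : 2 ^ (m + 1) = 2 ^ m + 2 ^ m := by rw [pow_succ]; ring
      omega
    rw [smulSub]
    apply span_le.mpr
    rintro z ⟨x, hx, y, hy, rfl⟩
    rcases hmax with hc | hc
    · have hxs := aux_mem_spanS.mp (ih (i + 1) hc hx)
      refine span_mono (Set.image_mono hstep) (aux_prod_mem hB x y ?_)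
      exact fun j hj => hxs j (left_ne_zero_of_mul hj)
    · have hys := aux_mem_spanS.mp (ih (n' + 1 - i) hc hy)
      refine span_mono (Set.image_mono hstep) (aux_prod_mem hB x y ?_)
      exact fun j hj => hys j (right_ne_zero_of_mul hj)

lemma aux_nilpotent (hB : IsNaturalBasis B)
    (hnc : ∀ j : ι, ¬ Relation.TransGen (edge B) j j) :
    npow (⊤ : Submodule K A) (2 ^ Fintype.card ι) = ⊥ := by
  have h := aux_npow_le_span hB (Fintype.card ι) (2 ^ Fintype.card ι) le_rfl
  have hempty : {k | ∃ i, k ∈ Dk (edge B) (Fintype.card ι) i} = (∅ : Set ι) := by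
    ext k
    simp only [Set.mem_setOf_eq, Set.mem_empty_iff_false, iff_false, not_exists]
    exact fun i => aux_Dk_empty (edge B) hnc i k
  rw [hempty, Set.image_empty, span_empty] at h
  exact le_bot_iff.mp h

lemma aux_exists_nonzero (hB : IsNaturalBasis B) {j : ι}
    (hcyc : Relation.TransGen (edge B) j j) :
    ∀ n, ∃ x ∈ npow (⊤ : Submodule K A) (n + 1),
      ∃ v, B.repr x v ≠ 0 ∧ Relation.TransGen (edge B) v v := by
  intro n
  induction n with
  | zero =>
    refine ⟨B j, by rw [aux_npow_one]; trivial, j, ?_, hcyc⟩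
    simp [B.repr_self]
  | succ n ih =>
    obtain ⟨x, hx, v, hv, hvc⟩ := ih
    obtain ⟨w, hvw, hwv⟩ := Relation.TransGen.head'_iff.mp hvc
    refine ⟨x * B v, ?_, w, ?_, Relation.TransGen.tail' hwv hvw⟩
    · exact aux_smulSub_le_succ ⊤ n (aux_mul_mem_smulSub hx trivial)
    · rw [aux_mul_basis hB, map_smul]
      simp only [Finsupp.smul_apply, smul_eq_mul]
      exact mul_ne_zero hv hvw

lemma aux_cyclic_neighbor {i : ι} (hc : IsCyclicVertex (edge B) i) :
    ∃ k, edge B i k ∧ IsCyclicVertex (edge B) k := by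
  obtain ⟨j, hp, hcy⟩ := hc
  rcases hp.cases_head with h | ⟨c, hic, hcj⟩
  · subst h
    obtain ⟨w, hiw, hwi⟩ := Relation.TransGen.head'_iff.mp hcy
    exact ⟨w, hiw, i, hwi, hcy⟩
  · exact ⟨c, hic, j, hcj, hcy⟩
end Helpers2

/-- Equivalence: `A = rad(A)` ↔ `Γ(A,B)` has no cycles ↔ `A` is nilpotent. -/
theorem stmt11 {K : Type*} [Field K] {A : Type*} [NonUnitalNonAssocRing A]
    [Module K A] [SMulCommClass K A A] [IsScalarTower K A A]
    {ι : Type*} [Fintype ι] (B : Module.Basis ι K A) (hB : IsNaturalBasis B) :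
    (rad K A = (⊤ : Submodule K A) ↔ ∀ j : ι, ¬ Relation.TransGen (edge B) j j) ∧
      ((∀ j : ι, ¬ Relation.TransGen (edge B) j j) ↔
        ∃ k : ℕ, 0 < k ∧ npow (⊤ : Submodule K A) k = ⊥) := by
  have hnil_of_nc : (∀ j : ι, ¬ Relation.TransGen (edge B) j j) →
      ∃ k : ℕ, 0 < k ∧ npow (⊤ : Submodule K A) k = ⊥ :=
    fun hnc => ⟨2 ^ Fintype.card ι, Nat.pow_pos (by norm_num),
      aux_nilpotent hB hnc⟩
  have hnc_of_nil : (∃ k : ℕ, 0 < k ∧ npow (⊤ : Submodule K A) k = ⊥) →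
      ∀ j : ι, ¬ Relation.TransGen (edge B) j j := by
    rintro ⟨k, hk, hnil⟩ j hcyc
    obtain ⟨k', rfl⟩ : ∃ k', k = k' + 1 := ⟨k - 1, by omega⟩
    obtain ⟨x, hx, v, hv, -⟩ := aux_exists_nonzero hB hcyc k'
    rw [hnil] at hx
    rw [(Submodule.mem_bot K).mp hx] at hv
    simp at hv
  refine ⟨⟨?_, ?_⟩, hnil_of_nc, hnc_of_nil⟩
  · -- rad = ⊤ → no cycles
    intro hrad j hcyc
    set S := {i : ι | ¬ IsCyclicVertex (edge B) i} with hS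
    have hclosed : ∀ i ∈ S, ∀ k, edge B i k → k ∈ S := by
      intro i hi k he hk
      obtain ⟨j', hkj', hj'⟩ := hk
      exact hi ⟨j', Relation.ReflTransGen.head he hkj', hj'⟩
    set I := span K (B '' S) with hI
    have hstepS : {k | ∃ i ∈ S, edge B i k} ⊆ S := by
      rintro k ⟨i, hi, he⟩; exact hclosed i hi k he
    have hideal : IsIdeal I := by
      intro x hx a
      have hxs := aux_mem_spanS.mp hx
      constructor
      · exact span_mono (Set.image_mono hstepS) (aux_prod_mem hB x a
          (fun i hi => hxs i (left_ne_zero_of_mul hi)))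
      · exact span_mono (Set.image_mono hstepS) (aux_prod_mem hB a x
          (fun i hi => hxs i (right_ne_zero_of_mul hi)))
    have habs : HasAbsorption I := by
      intro x h
      refine aux_mem_spanS.mpr fun i hi => ?_
      by_contra hiS
      rw [hS, Set.mem_setOf_eq, not_not] at hiS
      obtain ⟨k, he, hkc⟩ := aux_cyclic_neighbor hiS
      have hk' : B.repr (x * B i) k ≠ 0 := by
        rw [aux_mul_basis hB, map_smul]
        simp only [Finsupp.smul_apply, smul_eq_mul]
        exact mul_ne_zero hi he
      exact (aux_mem_spanS.mp (h (B i)) k hk') hkc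
    have hle : rad K A ≤ I := sInf_le ⟨hideal, habs⟩
    rw [hrad] at hle
    have hjmem : B j ∈ I := hle Submodule.mem_top
    have hjS := aux_mem_spanS.mp hjmem j (by simp [B.repr_self])
    exact hjS ⟨j, Relation.ReflTransGen.refl, hcyc⟩
  · -- no cycles → rad = ⊤
    intro hnc
    obtain ⟨k, hk, hnil⟩ := hnil_of_nc hnc
    refine le_antisymm le_top (le_sInf ?_)
    rintro I ⟨hideal, habs⟩
    have step : ∀ n, npow (⊤ : Submodule K A) (n + 2) ≤ I →
        npow (⊤ : Submodule K A) (n + 1) ≤ I := by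
      intro n h x hx
      exact habs x fun a => h (aux_smulSub_le_succ ⊤ n (aux_mul_mem_smulSub hx trivial))
    have desc : ∀ d n, npow (⊤ : Submodule K A) (n + 1 + d) ≤ I →
        npow (⊤ : Submodule K A) (n + 1) ≤ I := by
      intro d
      induction d with
      | zero => intro n h; exact h
      | succ d ih =>
        intro n h
        refine ih n ?_
        have h2 := step (n + d) (by rwa [show n + 1 + (d + 1) = n + d + 2 by omega] at h)
        rwa [show n + d + 1 = n + 1 + d by omega] at h2
    have htop : npow (⊤ : Submodule K A) 1 ≤ I := by
      apply desc (k - 1) 0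
      rw [show 0 + 1 + (k - 1) = k by omega, hnil]
      exact bot_le
    rwa [aux_npow_one] at htop
end

section
/- There exists a 3-dimensional evolution algebra A with natural basis {e_1, e_2, e_3} satisfying e_1^2 = e_2^2 = e_2 + e_3 and e_3^2 = -(e_2 + e_3), such that I = span{e_2 + e_3} is a nilpotent ideal of A (indeed I^2 = 0) but I is not contained in rad(A); in fact rad(A) = ann(A) = {0}. -/
open Submodule

section Example14

/-- The underlying space of the example: a 3-dimensional rational vector space. -/
def E3 : Type := Fin 3 → ℚ

noncomputable instance : AddCommGroup E3 := Pi.addCommGroup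
noncomputable instance : Module ℚ E3 := Pi.module _ _ _

/-- Structure vectors: `e₁² = e₂² = e₂ + e₃` and `e₃² = -(e₂ + e₃)`. -/
def cvec : Fin 3 → E3 := ![![0, 1, 1], ![0, 1, 1], ![0, -1, -1]]

noncomputable instance : Mul E3 :=
  ⟨fun x y => ∑ i : Fin 3, ((x i) * (y i)) • cvec i⟩

lemma E3.mul_def (x y : E3) : x * y = ∑ i : Fin 3, ((x i) * (y i)) • cvec i := rfl

noncomputable instance : NonUnitalNonAssocRing E3 :=
  { (inferInstance : AddCommGroup E3), (inferInstance : Mul E3) with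
    left_distrib := by
      intro a b c
      show ∑ i : Fin 3, (a i * (b + c) i) • cvec i
          = (∑ i : Fin 3, (a i * b i) • cvec i) + ∑ i : Fin 3, (a i * c i) • cvec i
      rw [← Finset.sum_add_distrib]
      refine Finset.sum_congr rfl fun i _ => ?_
      show (a i * (b i + c i)) • cvec i = _
      rw [mul_add, add_smul]
    right_distrib := by
      intro a b c
      show ∑ i : Fin 3, ((a + b) i * c i) • cvec i
          = (∑ i : Fin 3, (a i * c i) • cvec i) + ∑ i : Fin 3, (b i * c i) • cvec i
      rw [← Finset.sum_add_distrib]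
      refine Finset.sum_congr rfl fun i _ => ?_
      show ((a i + b i) * c i) • cvec i = _
      rw [add_mul, add_smul]
    zero_mul := by
      intro a
      show ∑ i : Fin 3, ((0 : E3) i * a i) • cvec i = 0
      refine Finset.sum_eq_zero fun i _ => ?_
      show ((0 : ℚ) * a i) • cvec i = 0
      rw [zero_mul, zero_smul]
    mul_zero := by
      intro a
      show ∑ i : Fin 3, (a i * (0 : E3) i) • cvec i = 0
      refine Finset.sum_eq_zero fun i _ => ?_
      show (a i * (0 : ℚ)) • cvec i = 0
      rw [mul_zero, zero_smul] }

instance : SMulCommClass ℚ E3 E3 := by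
  constructor
  intro r x y
  show r • (x * y) = x * (r • y)
  rw [E3.mul_def, E3.mul_def, Finset.smul_sum]
  refine Finset.sum_congr rfl fun i _ => ?_
  show r • ((x i * y i) • cvec i) = (x i * (r * y i)) • cvec i
  rw [smul_smul, mul_left_comm]

instance : IsScalarTower ℚ E3 E3 := by
  constructor
  intro r x y
  show (r • x) * y = r • (x * y)
  rw [E3.mul_def, E3.mul_def, Finset.smul_sum]
  refine Finset.sum_congr rfl fun i _ => ?_
  show ((r * x i) * y i) • cvec i = r • ((x i * y i) • cvec i)
  rw [smul_smul, mul_assoc]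

/-- The natural basis `{e₁, e₂, e₃}` (the standard basis). -/
noncomputable def B3 : Module.Basis (Fin 3) ℚ E3 := Pi.basisFun ℚ (Fin 3)

lemma E3.app_add (x y : E3) (k : Fin 3) : (x + y) k = x k + y k := rfl
lemma E3.app_smul (c : ℚ) (x : E3) (k : Fin 3) : (c • x) k = c * x k := rfl
lemma E3.app_zero (k : Fin 3) : (0 : E3) k = 0 := rfl
lemma E3.app_neg (x : E3) (k : Fin 3) : (-x) k = -(x k) := rfl

lemma B3_apply (i j : Fin 3) : B3 i j = if j = i then 1 else 0 := by
  show (Pi.basisFun ℚ (Fin 3)) i j = _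
  rw [Pi.basisFun_apply]
  simp [Pi.single_apply]

/-- `u = e₂ + e₃ = (0,1,1)`. -/
lemma u_eq : B3 1 + B3 2 = (![0, 1, 1] : E3) := by
  funext k
  rw [E3.app_add, B3_apply, B3_apply]
  fin_cases k <;> norm_num [Fin.ext_iff]

lemma mul_key (x y : E3) :
    x * y = (x 0 * y 0 + x 1 * y 1 - x 2 * y 2) • (![0, 1, 1] : E3) := by
  rw [E3.mul_def, Fin.sum_univ_three]
  funext k
  rw [E3.app_add, E3.app_add, E3.app_smul, E3.app_smul, E3.app_smul]
  show _ = (x 0 * y 0 + x 1 * y 1 - x 2 * y 2) * (![0, 1, 1] : Fin 3 → ℚ) k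
  fin_cases k <;> simp [cvec] <;> ring

lemma B3_offdiag (i j : Fin 3) (hij : i ≠ j) (k : Fin 3) : B3 i k * B3 j k = 0 := by
  rw [B3_apply, B3_apply]
  by_cases h : k = i
  · by_cases h' : k = j
    · exact absurd (h.symm.trans h') hij
    · rw [if_neg h', mul_zero]
  · rw [if_neg h, zero_mul]

lemma u_ne_zero : (![0, 1, 1] : E3) ≠ 0 := by
  intro h
  have := congrFun h 1
  change ((![0, 1, 1] : Fin 3 → ℚ) 1) = (0 : ℚ) at this
  simp at this

lemma E3npow_one (I : Submodule ℚ E3) : npow I 1 = I := by rw [npow]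

lemma E3npow_two (I : Submodule ℚ E3) :
    npow I 2 = ⨆ i : Fin 1, smulSub (npow I (i.1 + 1)) (npow I (1 - i.1)) := by
  rw [npow]

set_option maxHeartbeats 1000000 in
/-- Example: `A` is a 3-dimensional evolution algebra with natural basis
`{e₁, e₂, e₃}` with `e₁² = e₂² = -(e₃²) = e₂ + e₃`; the ideal
`I = span{e₂ + e₃}` is nonzero and nilpotent (`I² = 0`) yet not contained in
`rad(A)`, since `rad(A) = ann(A) = 0`. -/
theorem stmt14 :
    Module.finrank ℚ E3 = 3 ∧
    IsNaturalBasis B3 ∧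
    B3 0 * B3 0 = B3 1 + B3 2 ∧
    B3 1 * B3 1 = B3 1 + B3 2 ∧
    B3 2 * B3 2 = -(B3 1 + B3 2) ∧
    IsIdeal (Submodule.span ℚ {B3 1 + B3 2}) ∧
    Submodule.span ℚ {B3 1 + B3 2} ≠ ⊥ ∧
    npow (Submodule.span ℚ {B3 1 + B3 2}) 2 = ⊥ ∧
    ¬ Submodule.span ℚ {B3 1 + B3 2} ≤ rad ℚ E3 ∧
    rad ℚ E3 = ⊥ ∧
    annSub ℚ E3 = ⊥ := by
  set u : E3 := ![0, 1, 1] with hu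
  have hmemI : ∀ x : E3, x ∈ Submodule.span ℚ {B3 1 + B3 2} ↔ ∃ c : ℚ, c • u = x := by
    intro x
    rw [u_eq]
    exact Submodule.mem_span_singleton
  have hprod : ∀ x y : E3, x * y ∈ Submodule.span ℚ {B3 1 + B3 2} := by
    intro x y
    rw [hmemI]
    exact ⟨_, (mul_key x y).symm⟩
  -- annihilator computation: if x * a = 0 for all a then x = 0
  have hann : ∀ x : E3, (∀ a : E3, x * a = 0) → x = 0 := by
    intro x hx
    funext k
    have h0 := congrFun (hx (B3 0)) 1
    have h1 := congrFun (hx (B3 1)) 1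
    have h2 := congrFun (hx (B3 2)) 1
    rw [mul_key] at h0 h1 h2
    erw [E3.app_smul, E3.app_zero] at h0 h1 h2
    simp [B3_apply, hu] at h0 h1 h2
    rw [E3.app_zero]
    fin_cases k <;> simp_all
  have radbot : rad ℚ E3 = ⊥ := by
    apply le_antisymm _ bot_le
    apply sInf_le
    constructor
    · intro x hx a
      simp only [Submodule.mem_bot] at hx
      simp [hx]
    · intro x hx
      simp only [Submodule.mem_bot] at hx ⊢
      apply hann
      intro a
      exact hx a
  have hIne : Submodule.span ℚ {B3 1 + B3 2} ≠ ⊥ := by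
    intro h
    have : B3 1 + B3 2 ∈ Submodule.span ℚ {B3 1 + B3 2} :=
      Submodule.mem_span_singleton_self _
    rw [h, Submodule.mem_bot, u_eq] at this
    exact u_ne_zero this
  refine ⟨?_, ?_, ?_, ?_, ?_, ?_, hIne, ?_, ?_, radbot, ?_⟩
  · show Module.finrank ℚ (Fin 3 → ℚ) = 3
    simp
  · intro i j hij
    rw [mul_key, B3_offdiag i j hij, B3_offdiag i j hij, B3_offdiag i j hij]
    norm_num
    rfl
  · rw [mul_key, u_eq, B3_apply, B3_apply, B3_apply, if_pos rfl,
      if_neg (show ¬(1 : Fin 3) = 0 by decide), if_neg (show ¬(2 : Fin 3) = 0 by decide)]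
    norm_num
    rfl
  · rw [mul_key, u_eq, B3_apply, B3_apply, B3_apply, if_pos rfl,
      if_neg (show ¬(0 : Fin 3) = 1 by decide), if_neg (show ¬(2 : Fin 3) = 1 by decide)]
    norm_num
    rfl
  · rw [mul_key, u_eq, B3_apply, B3_apply, B3_apply, if_pos rfl,
      if_neg (show ¬(0 : Fin 3) = 2 by decide), if_neg (show ¬(1 : Fin 3) = 2 by decide)]
    norm_num
    funext k
    change _ = -((![0, 1, 1] : Fin 3 → ℚ) k)
    fin_cases k <;> norm_num
  · intro x hx a
    exact ⟨hprod x a, hprod a x⟩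
  · -- npow I 2 = ⊥
    rw [E3npow_two]
    apply le_antisymm _ bot_le
    apply iSup_le
    intro i
    have hi : i.1 = 0 := by omega
    rw [hi]
    norm_num [E3npow_one]
    rw [smulSub, eq_bot_iff, Submodule.span_le]
    rintro z ⟨x, hx, y, hy, rfl⟩
    obtain ⟨c, rfl⟩ := (hmemI x).mp hx
    obtain ⟨d, rfl⟩ := (hmemI y).mp hy
    have huu : (c • u) * (d • u) = 0 := by
      rw [mul_key]
      rw [E3.app_smul, E3.app_smul, E3.app_smul, E3.app_smul, E3.app_smul, E3.app_smul]
      have h0 : u 0 = 0 := rfl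
      have h1 : u 1 = 1 := rfl
      have h2 : u 2 = 1 := rfl
      rw [h0, h1, h2]
      ring_nf
      exact zero_smul ℚ _
    simp only [SetLike.mem_coe, Submodule.mem_bot]
    exact huu
  · rw [radbot]
    intro h
    exact hIne (le_bot_iff.mp h)
  · apply le_antisymm _ bot_le
    intro x hx
    simp only [Submodule.mem_bot]
    exact hann x fun a => (hx a).1

end Example14
end

section
/- Let A be a finite-dimensional evolution algebra, I an ideal with the extension property, and B = {e_i}_{i ∈ Λ} a natural basis of A with I = span{e_i : i ∈ Λ'}, Λ' ⊆ Λ. Order B so that all indices of Λ' come before those of Λ \ Λ'. Then the structure matrix M_B has block lower-triangular form: the upper-left |Λ'| × |Λ'| block is the structure matrix of I relative to the natural basis {e_i}_{i∈Λ'}, the upper-right block is zero, and the lower-right block is the structure matrix of A/I relative to the natural basis {ē_i : i ∈ Λ \ Λ'}. -/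
open Submodule

/-- Block lower-triangular form of the structure matrix relative to an ideal
with the extension property. -/
theorem stmt15 {K : Type*} [Field K] {A : Type*} [NonUnitalNonAssocRing A]
    [Module K A] [SMulCommClass K A A] [IsScalarTower K A A]
    {ι : Type*} [Fintype ι] (B : Module.Basis ι K A) (hB : IsNaturalBasis B)
    (Λ' : Set ι) (I : Submodule K A) (hI : IsIdeal I)
    (hspan : I = Submodule.span K (B '' Λ')) :
    ∃ (B' : Module.Basis Λ' K I) (Bb : Module.Basis {i : ι // i ∉ Λ'} K (A ⧸ I)),
      (∀ i : Λ', (B' i : A) = B i.1) ∧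
      (∀ i : {i : ι // i ∉ Λ'}, Bb i = Submodule.Quotient.mk (B i.1)) ∧
      -- B' is a natural basis of I, Bb is a natural basis of A/I
      (∀ i j : Λ', i ≠ j → subMul hI (B' i) (B' j) = 0) ∧
      (∀ i j : {i : ι // i ∉ Λ'}, i ≠ j → quotMul I hI (Bb i) (Bb j) = 0) ∧
      -- upper-right block of M_B is zero
      (∀ i ∈ Λ', ∀ k ∉ Λ', B.repr (B i * B i) k = 0) ∧
      -- upper-left block of M_B is the structure matrix of I relative to B'
      (∀ i k : Λ', B'.repr (subMul hI (B' i) (B' i)) k = B.repr (B i.1 * B i.1) k.1) ∧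
      -- lower-right block of M_B is the structure matrix of A/I relative to Bb
      (∀ i k : {i : ι // i ∉ Λ'},
        Bb.repr (quotMul I hI (Bb i) (Bb i)) k = B.repr (B i.1 * B i.1) k.1) := by
  classical
  have hli : LinearIndependent K (fun i : Λ' => B i.1) :=
    B.linearIndependent.comp _ Subtype.val_injective
  have hrange : Set.range (fun i : Λ' => B i.1) = B '' Λ' := by
    rw [show (fun i : Λ' => B i.1) = B ∘ Subtype.val from rfl, Set.range_comp,
      Subtype.range_coe]
  have heq : Submodule.span K (Set.range (fun i : Λ' => B i.1)) = I := by
    rw [hrange, hspan]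
  let e : Submodule.span K (Set.range (fun i : Λ' => B i.1)) ≃ₗ[K] I :=
    LinearEquiv.ofEq _ _ heq
  let B' : Module.Basis Λ' K I := (Module.Basis.span hli).map e
  have hcoe : ∀ i : Λ', (B' i : A) = B i.1 := by
    intro i
    show ((e (Module.Basis.span hli i) : I) : A) = B i.1
    have : ((e (Module.Basis.span hli i) : I) : A) = ((Module.Basis.span hli i : _) : A) := rfl
    rw [this, Module.Basis.span_apply]
  have hBI : ∀ j ∈ Λ', B j ∈ I := fun j hj =>
    hspan ▸ Submodule.subset_span (Set.mem_image_of_mem _ hj)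
  have hmemI : ∀ x : A, x ∈ I → ∀ k ∉ Λ', B.repr x k = 0 := by
    intro x hx k hk
    rw [hspan] at hx
    have := (Module.Basis.mem_span_image B).mp hx
    by_contra h0
    exact hk (this (Finsupp.mem_support_iff.mpr h0))
  -- the quotient basis
  set v : {i : ι // i ∉ Λ'} → A ⧸ I := fun j => Submodule.Quotient.mk (B j.1) with hv
  have hmkQ : ∀ x : A, I.mkQ x = Submodule.Quotient.mk x := fun x => rfl
  have hlinQ : LinearIndependent K v := by
    rw [Fintype.linearIndependent_iff]
    intro g hg j
    have hsum : I.mkQ (∑ i, g i • B i.1) = 0 := by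
      rw [map_sum]
      simpa [hmkQ] using hg
    have hmem : (∑ i, g i • B i.1) ∈ I := by
      rwa [hmkQ, Submodule.Quotient.mk_eq_zero] at hsum
    have h0 := hmemI _ hmem j.1 j.2
    rw [map_sum] at h0
    simp only [map_smul, Module.Basis.repr_self, Finsupp.coe_finset_sum, Finsupp.coe_smul,
      Finset.sum_apply, Pi.smul_apply, Finsupp.single_apply, smul_eq_mul] at h0
    rwa [Finset.sum_eq_single j (fun b _ hb => by
        simp [show b.1 ≠ j.1 from fun h => hb (Subtype.ext h)])
      (fun h => absurd (Finset.mem_univ j) h), if_pos rfl, mul_one] at h0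
  have hspanQ : ⊤ ≤ Submodule.span K (Set.range v) := by
    rintro y -
    obtain ⟨x, rfl⟩ := Submodule.Quotient.mk_surjective I y
    have hx : Submodule.Quotient.mk (p := I) x = ∑ k, B.repr x k • I.mkQ (B k) := by
      rw [← hmkQ]
      conv_lhs => rw [← B.sum_repr x]
      rw [map_sum]
      simp
    rw [hx]
    refine Submodule.sum_mem _ fun k _ => ?_
    by_cases hk : k ∈ Λ'
    · have : I.mkQ (B k) = 0 := by
        rw [hmkQ, Submodule.Quotient.mk_eq_zero]; exact hBI k hk
      rw [this, smul_zero]; exact zero_mem _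
    · exact Submodule.smul_mem _ _ (Submodule.subset_span ⟨⟨k, hk⟩, rfl⟩)
  let Bb : Module.Basis {i : ι // i ∉ Λ'} K (A ⧸ I) := Module.Basis.mk hlinQ hspanQ
  have hBb : ∀ j, Bb j = Submodule.Quotient.mk (B j.1) := fun j => Module.Basis.mk_apply _ _ j
  -- L1 : repr in I agrees with repr in A
  have L1 : ∀ (x : I) (k : Λ'), B'.repr x k = B.repr (x : A) k.1 := by
    intro x k
    have h : (Finsupp.lapply k).comp B'.repr.toLinearMap
        = ((Finsupp.lapply k.1).comp B.repr.toLinearMap).comp I.subtype := by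
      apply B'.ext
      intro j
      simp only [LinearMap.comp_apply, LinearEquiv.coe_coe, Finsupp.lapply_apply,
        Module.Basis.repr_self, Submodule.subtype_apply, hcoe, Finsupp.single_apply]
      by_cases hjk : j = k
      · simp [hjk]
      · rw [if_neg hjk, if_neg (fun h => hjk (Subtype.ext h))]
    exact LinearMap.congr_fun h x
  -- L2 : repr in quotient agrees with repr in A
  have L2 : ∀ (x : A) (k : {i : ι // i ∉ Λ'}),
      Bb.repr (Submodule.Quotient.mk x) k = B.repr x k.1 := by
    intro x k
    have h : ((Finsupp.lapply k).comp Bb.repr.toLinearMap).comp I.mkQ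
        = (Finsupp.lapply k.1).comp B.repr.toLinearMap := by
      apply B.ext
      intro j
      simp only [LinearMap.comp_apply, LinearEquiv.coe_coe, Finsupp.lapply_apply,
        Module.Basis.repr_self, Finsupp.single_apply]
      by_cases hj : j ∈ Λ'
      · have h0 : I.mkQ (B j) = 0 := by
          rw [hmkQ, Submodule.Quotient.mk_eq_zero]; exact hBI j hj
        rw [h0, map_zero, Finsupp.zero_apply,
          if_neg (fun (h : j = k.1) => k.2 (h ▸ hj))]
      · have h1 : I.mkQ (B j) = Bb ⟨j, hj⟩ := by rw [hmkQ, hBb]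
        rw [h1, Module.Basis.repr_self, Finsupp.single_apply]
        by_cases hjk : j = k.1
        · rw [if_pos hjk, if_pos (Subtype.ext hjk)]
        · rw [if_neg hjk, if_neg (fun h => hjk (congrArg Subtype.val h))]
    have := LinearMap.congr_fun h x
    simpa [hmkQ] using this
  refine ⟨B', Bb, hcoe, hBb, ?_, ?_, ?_, ?_, ?_⟩
  · intro i j hij
    apply Subtype.ext
    show (B' i : A) * (B' j : A) = 0
    rw [hcoe, hcoe]
    exact hB _ _ (fun h => hij (Subtype.ext h))
  · intro i j hij
    rw [hBb, hBb]
    show Submodule.Quotient.mk (B i.1 * B j.1) = 0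
    rw [hB _ _ (fun h => hij (Subtype.ext h))]
    exact Submodule.Quotient.mk_eq_zero I |>.mpr (zero_mem I)
  · intro i hi k hk
    have : B i * B i ∈ I := (hI (B i) (hBI i hi) (B i)).2
    exact hmemI _ this k hk
  · intro i k
    have : ((subMul hI (B' i) (B' i) : I) : A) = B i.1 * B i.1 := by
      show (B' i : A) * (B' i : A) = _
      rw [hcoe]
    rw [L1, this]
  · intro i k
    have : quotMul I hI (Bb i) (Bb i) = Submodule.Quotient.mk (B i.1 * B i.1) := by
      rw [hBb]; rfl
    rw [this, L2]
end
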